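/- Let Q = αvvᵀ + βI (α, β > 0, Eᵢv ≠ 0 ∀i) and let w ∈ ℝ^m be an eigenvector of Q·(Σᵢ yᵢEᵢ) associated with its largest eigenvalue μ. Then, provided μ ≠ βyᵢ for all i, w ∈ Λ_v; moreover writing w = Σᵢ λᵢEᵢv, all λᵢ have the same sign (all ≥ 0 or all ≤ 0). -/

import Mathlib

open Matrix

/-- If `w` is an eigenvector of `Q(Σᵢ yᵢEᵢ)` (with `Q = αvvᵀ + βI`) for its
largest eigenvalue `μ`, and `μ ≠ βyᵢ` for all `i`, then `w ∈ Λ_v`, i.e. `w = Σᵢ λᵢEᵢv`, and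
all the `λᵢ` have the same sign. -/
theorem stmt19 {m q : ℕ} (N : Fin q → Finset (Fin m))
    (hdisj : ∀ i j : Fin q, i ≠ j → Disjoint (N i) (N j))
    (hcover : Finset.univ.biUnion N = (Finset.univ : Finset (Fin m)))
    (E : Fin q → Matrix (Fin m) (Fin m) ℝ)
    (hE : ∀ i, E i = Matrix.diagonal (fun j => if j ∈ N i then (1 : ℝ) else 0))
    (α β : ℝ) (hα : 0 < α) (hβ : 0 < β)
    (v : Fin m → ℝ) (hv : ∀ i, (E i) *ᵥ v ≠ 0)
    (y : Fin q → ℝ) (hy : ∀ i, 0 < y i)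
    (Q : Matrix (Fin m) (Fin m) ℝ)
    (hQ : Q = α • Matrix.vecMulVec v v + β • (1 : Matrix (Fin m) (Fin m) ℝ))
    (μ : ℝ) (w : Fin m → ℝ) (hw : w ≠ 0)
    (heig : (Q * (∑ i, y i • E i)) *ᵥ w = μ • w)
    -- `μ` is the largest eigenvalue
    (hmax : ∀ μ' : ℝ, (∃ u : Fin m → ℝ, u ≠ 0 ∧ (Q * (∑ i, y i • E i)) *ᵥ u = μ' • u) →
      μ' ≤ μ)
    (hne : ∀ i, μ ≠ β * y i) :
    ∃ lam : Fin q → ℝ, w = ∑ i, lam i • (E i) *ᵥ v ∧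
      ((∀ i, 0 ≤ lam i) ∨ (∀ i, lam i ≤ 0)) := by
  rcases Nat.eq_zero_or_pos m with hm | hm
  · exact absurd (funext fun j => absurd j.isLt (by omega)) hw
  -- each index belongs to a unique block
  have hex : ∀ j : Fin m, ∃ i, j ∈ N i := by
    intro j
    have h := Finset.mem_univ j
    rw [← hcover] at h
    simpa using h
  choose idx hidx using hex
  have hidxu : ∀ (j : Fin m) (i : Fin q), j ∈ N i → i = idx j := by
    intro j i h
    by_contra hne'
    exact (Finset.disjoint_left.mp (hdisj i (idx j) hne') h) (hidx j)
  set d : Fin m → ℝ := fun j => y (idx j) with hd_def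
  have hd : ∀ j, 0 < d j := fun j => hy _
  -- action of the diagonal matrix
  have hDmat : (∑ i, y i • E i) = Matrix.diagonal d := by
    ext j k
    rcases eq_or_ne j k with rfl | hjk
    · rw [Matrix.sum_apply, Matrix.diagonal_apply_eq]
      simp only [Matrix.smul_apply, hE, Matrix.diagonal_apply_eq, smul_eq_mul]
      rw [Finset.sum_eq_single (idx j)]
      · simp [hidx j]; rfl
      · intro i _ hi
        have : j ∉ N i := fun h => hi (hidxu j i h)
        simp [this]
      · simp
    · rw [Matrix.sum_apply, Matrix.diagonal_apply_ne _ hjk]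
      simp [Matrix.smul_apply, hE, Matrix.diagonal_apply_ne _ hjk]
  have hDx : ∀ (x : Fin m → ℝ) (j : Fin m), ((∑ i, y i • E i) *ᵥ x) j = d j * x j := by
    intro x j
    rw [hDmat, mulVec_diagonal]
  -- action of Q * D
  have hform : ∀ (u : Fin m → ℝ) (j : Fin m),
      ((Q * (∑ i, y i • E i)) *ᵥ u) j
        = α * (∑ k, v k * (d k * u k)) * v j + β * (d j * u j) := by
    intro u j
    rw [← mulVec_mulVec, hQ]
    have hDu : ((∑ i, y i • E i) *ᵥ u) = fun k => d k * u k := funext (hDx u)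
    rw [hDu]
    simp only [Matrix.add_mulVec, Matrix.smul_mulVec, Matrix.one_mulVec,
      Pi.add_apply, Pi.smul_apply, smul_eq_mul]
    have hvv : (vecMulVec v v *ᵥ fun k => d k * u k) j
        = (∑ k, v k * (d k * u k)) * v j := by
      simp only [vecMulVec, mulVec, dotProduct, of_apply, Finset.sum_mul]
      exact Finset.sum_congr rfl fun k _ => by ring
    rw [hvv]; ring
  -- choose the block with maximal y and a coordinate with v ≠ 0 there
  obtain ⟨i₀, -, hmaxy⟩ := Finset.univ.exists_max_image y ⟨idx ⟨0, hm⟩, Finset.mem_univ _⟩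
  obtain ⟨j₀, hj₀⟩ := Function.ne_iff.mp (hv i₀)
  rw [hE] at hj₀
  simp only [mulVec_diagonal, Pi.zero_apply] at hj₀
  by_cases hj₀N : j₀ ∈ N i₀
  swap
  · simp [hj₀N] at hj₀
  simp only [hj₀N, if_true, one_mul] at hj₀
  have hidx0 : idx j₀ = i₀ := (hidxu j₀ i₀ hj₀N).symm
  have hdj₀ : d j₀ = y i₀ := by rw [hd_def]; simp [hidx0]
  have hdmax : ∀ j, d j ≤ d j₀ := by
    intro j; rw [hdj₀]; exact hmaxy (idx j) (Finset.mem_univ _)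
  set ε : ℝ := α * (d j₀ * v j₀ ^ 2) with hε_def
  have hε : 0 < ε := by
    have := hd j₀
    positivity
  set C : ℝ := α * ∑ j, d j * v j ^ 2 with hC_def
  have hεC : ε ≤ C := by
    have h1 : d j₀ * v j₀ ^ 2 ≤ ∑ j, d j * v j ^ 2 := by
      apply Finset.single_le_sum (f := fun j => d j * v j ^ 2) _ (Finset.mem_univ j₀)
      intro j _
      have := hd j
      positivity
    exact mul_le_mul_of_nonneg_left h1 hα.le
  have hC : 0 < C := lt_of_lt_of_le hε hεC
  set g : ℝ → ℝ := fun t => ∑ j, α * (d j * v j ^ 2) / (t - β * d j) with hg_def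
  set t₀ : ℝ := β * d j₀ + ε / 2 with ht₀_def
  set t₁ : ℝ := β * d j₀ + (C + 1) with ht₁_def
  have ht01 : t₀ ≤ t₁ := by rw [ht₀_def, ht₁_def]; linarith
  have hden : ∀ t ∈ Set.Icc t₀ t₁, ∀ j, 0 < t - β * d j := by
    intro t ht j
    have h1 : β * d j ≤ β * d j₀ := mul_le_mul_of_nonneg_left (hdmax j) hβ.le
    have h2 := ht.1
    rw [ht₀_def] at h2
    linarith
  have hcont : ContinuousOn g (Set.Icc t₀ t₁) := by
    apply continuousOn_finset_sum
    intro j _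
    exact continuousOn_const.div ((continuous_id.sub continuous_const).continuousOn)
      (fun t ht => (hden t ht j).ne')
  have ht₀mem : t₀ ∈ Set.Icc t₀ t₁ := Set.left_mem_Icc.mpr ht01
  have ht₁mem : t₁ ∈ Set.Icc t₀ t₁ := Set.right_mem_Icc.mpr ht01
  have hg0 : 2 ≤ g t₀ := by
    have hterm : α * (d j₀ * v j₀ ^ 2) / (t₀ - β * d j₀) = 2 := by
      have : t₀ - β * d j₀ = ε / 2 := by rw [ht₀_def]; ring
      rw [this, hε_def]
      field_simp
      exact div_self (hd j₀).ne'
    calc (2:ℝ) = α * (d j₀ * v j₀ ^ 2) / (t₀ - β * d j₀) := hterm.symm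
      _ ≤ g t₀ := by
          apply Finset.single_le_sum (f := fun j => α * (d j * v j ^ 2) / (t₀ - β * d j))
            _ (Finset.mem_univ j₀)
          intro j _
          have h1 := hden t₀ ht₀mem j
          have h2 := hd j
          positivity
  have hg1 : g t₁ ≤ 1 := by
    have h1 : g t₁ ≤ ∑ j, α * (d j * v j ^ 2) / (C + 1) := by
      apply Finset.sum_le_sum
      intro j _
      have hnum : 0 ≤ α * (d j * v j ^ 2) := by have := hd j; positivity
      have hd1 : C + 1 ≤ t₁ - β * d j := by
        have : β * d j ≤ β * d j₀ := mul_le_mul_of_nonneg_left (hdmax j) hβ.le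
        rw [ht₁_def]; linarith
      have hd2 : (0:ℝ) < C + 1 := by linarith
      rw [div_le_div_iff₀ (by linarith) hd2]
      nlinarith [hnum, hd1]
    have h2 : ∑ j, α * (d j * v j ^ 2) / (C + 1) = C / (C + 1) := by
      rw [← Finset.sum_div, hC_def, Finset.mul_sum]
    have h3 : C / (C + 1) ≤ 1 := by
      rw [div_le_one (by linarith)]; linarith
    rw [h2] at h1
    linarith
  -- intermediate value theorem: a root t of the secular equation, t > β * max y
  have hivt := intermediate_value_Icc' ht01 hcont
  have h1mem : (1:ℝ) ∈ Set.Icc (g t₁) (g t₀) := ⟨hg1, by linarith⟩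
  obtain ⟨t, htmem, hgt⟩ := hivt h1mem
  set u : Fin m → ℝ := fun j => v j / (t - β * d j) with hu_def
  have hu0 : u ≠ 0 := by
    intro h
    have : u j₀ = 0 := by rw [h]; rfl
    rw [hu_def] at this
    exact hj₀ ((div_eq_zero_iff.mp this).resolve_right (hden t htmem j₀).ne')
  have hS : α * (∑ k, v k * (d k * u k)) = 1 := by
    rw [Finset.mul_sum, ← hgt, hg_def]
    apply Finset.sum_congr rfl
    intro k _
    have hk := (hden t htmem k).ne'
    have h2 : v k * (d k * (v k / (t - β * d k))) = d k * v k ^ 2 / (t - β * d k) := by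
      field_simp
    simp only [hu_def]
    rw [h2]
    ring
  have heigu : (Q * (∑ i, y i • E i)) *ᵥ u = t • u := by
    funext j
    rw [hform, Pi.smul_apply, smul_eq_mul, hS, one_mul]
    simp only [hu_def]
    have hk := (hden t htmem j).ne'
    field_simp
    ring
  have htμ : t ≤ μ := hmax t ⟨u, hu0, heigu⟩
  have hlt : ∀ i, β * y i < μ := by
    intro i
    have h1 : y i ≤ d j₀ := hdj₀ ▸ hmaxy i (Finset.mem_univ _)
    have h2 : β * y i ≤ β * d j₀ := mul_le_mul_of_nonneg_left h1 hβ.le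
    have h3 := htmem.1
    rw [ht₀_def] at h3
    linarith
  -- solve for the coordinates of w
  set c : ℝ := ∑ k, v k * (d k * w k) with hc_def
  have hwj : ∀ j, w j = α * c * v j / (μ - β * d j) := by
    intro j
    have h1 : α * c * v j + β * (d j * w j) = μ * w j := by
      have := congrFun heig j
      rw [hform] at this
      rw [← hc_def] at this
      simpa using this
    have h2 : 0 < μ - β * d j := by
      have := hlt (idx j)
      simpa [hd_def] using sub_pos.mpr this
    rw [eq_div_iff h2.ne']
    ring_nf
    ring_nf at h1
    linarith
  refine ⟨fun i => α * c / (μ - β * y i), ?_, ?_⟩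
  · funext j
    have h1 : (∑ i, (fun i => α * c / (μ - β * y i)) i • (E i) *ᵥ v) j
        = ∑ i, α * c / (μ - β * y i) * ((if j ∈ N i then (1:ℝ) else 0) * v j) := by
      simp [Finset.sum_apply, hE, Matrix.smul_mulVec, mulVec_diagonal]
    rw [h1, Finset.sum_eq_single (idx j)]
    · rw [hwj j]
      simp [hidx j, hd_def]
      ring
    · intro i _ hi
      have : j ∉ N i := fun h => hi (hidxu j i h)
      simp [this]
    · simp
  · have hpos : ∀ i, 0 < μ - β * y i := fun i => sub_pos.mpr (hlt i)
    rcases le_or_gt 0 c with hc | hc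
    · left
      intro i
      exact div_nonneg (mul_nonneg hα.le hc) (hpos i).le
    · right
      intro i
      exact div_nonpos_of_nonpos_of_nonneg (by nlinarith) (hpos i).le
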